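/- Suppose F is strictly convex and S is a nonempty, closed, convex subset of X. Let a_1, …, a_m ∈ X (m ≥ 1) be points that are not collinear (they do not all lie on one line L(x,y)). Then the problem of minimizing x ↦ Σ_{i=1}^m ρ_F(a_i − x) over S has at most one optimal solution. If additionally X is a reflexive Banach space or S is compact, then this problem has exactly one optimal solution. -/

import Mathlib

open Set Pointwise Filter Topology Bornology Function

variable {X : Type*} [NormedAddCommGroup X] [NormedSpace ℝ X]

/-- The Minkowski gauge of `F`: `ρ_F(x) = inf {t ≥ 0 : x ∈ t • F}`. -/
noncomputable def rhoF (F : Set X) (x : X) : ℝ :=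
  sInf {t : ℝ | 0 ≤ t ∧ x ∈ t • F}

/-- The maximal time function `C_F(x; Q) = sup {ρ_F(q - x) : q ∈ Q}`. -/
noncomputable def maxTime (F Q : Set X) (x : X) : ℝ :=
  sSup ((fun q => rhoF F (q - x)) '' Q)

/-- The minimal time function `T_F(x; Θ) = inf {ρ_F(q - x) : q ∈ Θ}`. -/
noncomputable def minTime (F Θ : Set X) (x : X) : ℝ :=
  sInf ((fun q => rhoF F (q - x)) '' Θ)

/-- A normed space is reflexive if the canonical embedding into its double dual is surjective. -/
def IsReflexiveSpace (Y : Type*) [NormedAddCommGroup Y] [NormedSpace ℝ Y] : Prop :=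
  Function.Surjective (NormedSpace.inclusionInDoubleDual ℝ Y)

/-- The line through `x` and `y`: `L(x,y) = {t•x + (1-t)•y : t ∈ ℝ}`. -/
def lineThrough (x y : X) : Set X :=
  {z : X | ∃ t : ℝ, z = t • x + (1 - t) • y}

lemma rhoF_eq_gauge {F : Set X} (hF0 : (0 : X) ∈ F) (x : X) : rhoF F x = gauge F x := by
  by_cases hx : x = 0
  · subst hx
    rw [gauge_zero, rhoF]
    have h0 : (0:ℝ) ∈ {t : ℝ | 0 ≤ t ∧ (0:X) ∈ t • F} :=
      ⟨le_rfl, by simpa using smul_mem_smul_set (a := (0:ℝ)) hF0⟩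
    exact le_antisymm (csInf_le ⟨0, fun t ht => ht.1⟩ h0) (le_csInf ⟨0, h0⟩ fun t ht => ht.1)
  · rw [rhoF, gauge_def]
    congr 1
    ext t
    simp only [mem_setOf_eq, mem_sep_iff, mem_Ioi]
    constructor
    · rintro ⟨ht, hm⟩
      rcases ht.lt_or_eq with h | h
      · exact ⟨h, hm⟩
      · exfalso; apply hx
        rcases hm with ⟨y, _, rfl⟩
        simp [← h]
    · rintro ⟨ht, hm⟩; exact ⟨ht.le, hm⟩

lemma convexOn_gauge' {F : Set X} (hFconv : Convex ℝ F) (h0 : F ∈ 𝓝 (0:X)) :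
    ConvexOn ℝ univ (gauge F) := by
  refine ⟨convex_univ, fun x _ y _ s t hs ht hst => ?_⟩
  calc gauge F (s • x + t • y) ≤ gauge F (s • x) + gauge F (t • y) :=
        gauge_add_le hFconv (absorbent_nhds_zero h0) _ _
    _ = s * gauge F x + t * gauge F y := by
        rw [gauge_smul_of_nonneg hs, gauge_smul_of_nonneg ht, smul_eq_mul, smul_eq_mul]

lemma mem_of_gauge_le_one {F : Set X} (hFc : IsClosed F) (hFconv : Convex ℝ F)
    (h0 : F ∈ 𝓝 (0:X)) {x : X} (hx : gauge F x ≤ 1) : x ∈ F := by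
  have := (gauge_le_one_iff_mem_closure hFconv h0).mp hx
  rwa [hFc.closure_eq] at this

lemma gauge_coercive {F : Set X} (hFb : IsBounded F) (h0 : F ∈ 𝓝 (0:X)) :
    ∃ R : ℝ, 0 < R ∧ ∀ x : X, ‖x‖ / R ≤ gauge F x := by
  obtain ⟨r, hr⟩ := hFb.subset_closedBall 0
  refine ⟨max r 1, lt_of_lt_of_le one_pos (le_max_right _ _), fun x => ?_⟩
  exact le_gauge_of_subset_closedBall (absorbent_nhds_zero h0) (by positivity)
    (hr.trans (Metric.closedBall_subset_closedBall (le_max_left _ _)))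

lemma strict_gauge_eq {F : Set X} (hFc : IsClosed F) (hFb : IsBounded F) (hFconv : Convex ℝ F)
    (hF0 : (0 : X) ∈ interior F) (hFs : StrictConvex ℝ F) {u v : X}
    (h : gauge F (u + v) = gauge F u + gauge F v) :
    ∃ s t : ℝ, 0 ≤ s ∧ 0 ≤ t ∧ ¬(s = 0 ∧ t = 0) ∧ s • u = t • v := by
  have h0 : F ∈ 𝓝 (0:X) := mem_interior_iff_mem_nhds.mp hF0
  have habs : Absorbent ℝ F := absorbent_nhds_zero h0
  have hvb : Bornology.IsVonNBounded ℝ F := NormedSpace.isVonNBounded_iff ℝ |>.mpr hFb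
  by_cases hu : u = 0
  · exact ⟨1, 0, zero_le_one, le_rfl, by simp, by simp [hu]⟩
  by_cases hv : v = 0
  · exact ⟨0, 1, le_rfl, zero_le_one, by simp, by simp [hv]⟩
  have hα : 0 < gauge F u := (gauge_pos habs hvb).mpr hu
  have hβ : 0 < gauge F v := (gauge_pos habs hvb).mpr hv
  set α := gauge F u
  set β := gauge F v
  have hp : α⁻¹ • u ∈ F := by
    apply mem_of_gauge_le_one hFc hFconv h0
    rw [gauge_smul_of_nonneg (by positivity), smul_eq_mul, inv_mul_cancel₀ hα.ne']
  have hq : β⁻¹ • v ∈ F := by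
    apply mem_of_gauge_le_one hFc hFconv h0
    rw [gauge_smul_of_nonneg (by positivity), smul_eq_mul, inv_mul_cancel₀ hβ.ne']
  by_cases hpq : α⁻¹ • u = β⁻¹ • v
  · refine ⟨β, α, hβ.le, hα.le, fun h' => hβ.ne' h'.1, ?_⟩
    have := congrArg (fun w : X => (α * β) • w) hpq
    simp only [smul_smul] at this
    rw [show α * β * α⁻¹ = β by field_simp, show α * β * β⁻¹ = α by field_simp] at this
    exact this
  · exfalso
    have ha : 0 < α / (α + β) := by positivity
    have hb : 0 < β / (α + β) := by positivity
    have hab : α / (α + β) + β / (α + β) = 1 := by field_simp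
    have hw : (α / (α + β)) • (α⁻¹ • u) + (β / (α + β)) • (β⁻¹ • v) ∈ interior F :=
      hFs hp hq hpq ha hb hab
    have hwe : (α / (α + β)) • (α⁻¹ • u) + (β / (α + β)) • (β⁻¹ • v) = (α + β)⁻¹ • (u + v) := by
      rw [smul_smul, smul_smul, smul_add]
      congr 1 <;> congr 1 <;> (field_simp; try ring)
    rw [hwe] at hw
    have h1 : gauge F ((α + β)⁻¹ • (u + v)) < 1 :=
      (gauge_lt_one_iff_mem_interior hFconv h0).mpr hw
    rw [gauge_smul_of_nonneg (by positivity), smul_eq_mul, h,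
      inv_mul_cancel₀ (by positivity)] at h1
    exact lt_irrefl 1 h1

lemma mem_line_of_smul_eq {x y b : X} (hxy : x ≠ y) {s t : ℝ}
    (hne : ¬(s = 0 ∧ t = 0)) (h : s • (b - x) = t • (b - y)) : b ∈ lineThrough x y := by
  by_cases hst : s = t
  · subst hst
    have hs : s ≠ 0 := fun h0 => hne ⟨h0, h0⟩
    have h2 := smul_right_injective X hs h
    exact absurd (by rw [sub_right_injective.eq_iff] at h2; exact h2 : x = y) hxy
  · have hd : s - t ≠ 0 := sub_ne_zero.mpr hst
    have hda : (s - t) • b = s • x - t • y := by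
      linear_combination (norm := module) h
    refine ⟨(s - t)⁻¹ * s, ?_⟩
    apply smul_right_injective X hd
    show (s - t) • b = (s - t) • (((s - t)⁻¹ * s) • x + (1 - (s - t)⁻¹ * s) • y)
    rw [hda, smul_add, smul_smul, smul_smul]
    have e1 : (s - t) * ((s - t)⁻¹ * s) = s := by field_simp
    have e2 : (s - t) * (1 - (s - t)⁻¹ * s) = -t := by field_simp; ring
    rw [e1, e2]
    module

lemma key_subsingleton {F : Set X}
    (hFc : IsClosed F) (hFb : IsBounded F) (hFconv : Convex ℝ F)
    (hF0 : (0 : X) ∈ interior F) (hFs : StrictConvex ℝ F)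
    {S : Set X} (hSconv : Convex ℝ S)
    {m : ℕ} {a : Fin m → X}
    (hnotcol : ¬ ∃ x y : X, x ≠ y ∧ ∀ i, a i ∈ lineThrough x y) :
    {x ∈ S | ∀ y ∈ S,
      ∑ i : Fin m, gauge F (a i - x) ≤ ∑ i : Fin m, gauge F (a i - y)}.Subsingleton := by
  have h0 : F ∈ 𝓝 (0:X) := mem_interior_iff_mem_nhds.mp hF0
  have habs : Absorbent ℝ F := absorbent_nhds_zero h0
  intro p hp q hq
  by_contra hne
  set f : X → ℝ := fun z => ∑ i : Fin m, gauge F (a i - z) with hf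
  have hfpq : f p = f q := le_antisymm (hp.2 q hq.1) (hq.2 p hp.1)
  set z := (2⁻¹ : ℝ) • p + (2⁻¹ : ℝ) • q with hzdef
  have hzS : z ∈ S := hSconv hp.1 hq.1 (by norm_num) (by norm_num) (by norm_num)
  have hdecomp : ∀ i, a i - z = (2⁻¹:ℝ) • (a i - p) + (2⁻¹:ℝ) • (a i - q) := by
    intro i; rw [hzdef]; module
  have hterm : ∀ i, gauge F (a i - z) ≤
      2⁻¹ * gauge F (a i - p) + 2⁻¹ * gauge F (a i - q) := by
    intro i
    rw [hdecomp i]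
    calc gauge F ((2⁻¹:ℝ) • (a i - p) + (2⁻¹:ℝ) • (a i - q))
        ≤ gauge F ((2⁻¹:ℝ) • (a i - p)) + gauge F ((2⁻¹:ℝ) • (a i - q)) :=
          gauge_add_le hFconv habs _ _
      _ = 2⁻¹ * gauge F (a i - p) + 2⁻¹ * gauge F (a i - q) := by
          rw [gauge_smul_of_nonneg (by norm_num), gauge_smul_of_nonneg (by norm_num),
            smul_eq_mul, smul_eq_mul]
  have hsumle : f z ≤ ∑ i : Fin m, (2⁻¹ * gauge F (a i - p) + 2⁻¹ * gauge F (a i - q)) :=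
    Finset.sum_le_sum fun i _ => hterm i
  have hrhs : ∑ i : Fin m, (2⁻¹ * gauge F (a i - p) + 2⁻¹ * gauge F (a i - q)) = f p := by
    rw [Finset.sum_add_distrib, ← Finset.mul_sum, ← Finset.mul_sum]
    have : ∑ i : Fin m, gauge F (a i - q) = ∑ i : Fin m, gauge F (a i - p) := hfpq.symm
    rw [this]; ring
  have hzge : f p ≤ f z := hp.2 z hzS
  have hsumeq : f z = ∑ i : Fin m, (2⁻¹ * gauge F (a i - p) + 2⁻¹ * gauge F (a i - q)) :=
    le_antisymm hsumle (by rw [hrhs]; exact hzge)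
  have heach : ∀ i : Fin m, gauge F (a i - z) =
      2⁻¹ * gauge F (a i - p) + 2⁻¹ * gauge F (a i - q) := by
    have := (Finset.sum_eq_sum_iff_of_le (fun i _ => hterm i)).mp hsumeq.symm.symm
    · intro i; exact (this i (Finset.mem_univ i))
  refine hnotcol ⟨p, q, hne, fun i => ?_⟩
  have hgu : gauge F ((2⁻¹:ℝ) • (a i - p)) = 2⁻¹ * gauge F (a i - p) := by
    rw [gauge_smul_of_nonneg (by norm_num), smul_eq_mul]
  have hgv : gauge F ((2⁻¹:ℝ) • (a i - q)) = 2⁻¹ * gauge F (a i - q) := by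
    rw [gauge_smul_of_nonneg (by norm_num), smul_eq_mul]
  have hkey : gauge F ((2⁻¹:ℝ) • (a i - p) + (2⁻¹:ℝ) • (a i - q)) =
      gauge F ((2⁻¹:ℝ) • (a i - p)) + gauge F ((2⁻¹:ℝ) • (a i - q)) := by
    rw [← hdecomp i, hgu, hgv, heach i]
  obtain ⟨s, t, hs, ht, hst, hsmul⟩ := strict_gauge_eq hFc hFb hFconv hF0 hFs hkey
  rw [smul_smul, smul_smul] at hsmul
  exact mem_line_of_smul_eq hne
    (fun ⟨h1, h2⟩ => hst ⟨by rcases mul_eq_zero.mp h1 with h|h; exact h; norm_num at h,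
                       by rcases mul_eq_zero.mp h2 with h|h; exact h; norm_num at h⟩) hsmul

noncomputable def Jw : X → WeakDual ℝ (StrongDual ℝ X) :=
  fun x => StrongDual.toWeakDual (NormedSpace.inclusionInDoubleDual ℝ X x)

lemma Jw_apply (x : X) (g : StrongDual ℝ X) : Jw x g = g x := rfl

lemma Jw_injective : Function.Injective (Jw (X := X)) := by
  intro x y h
  have := congrArg (WeakDual.toStrongDual) h
  simp only [Jw, StrongDual.coe_toWeakDual] at this
  exact (NormedSpace.inclusionInDoubleDualLi ℝ (E := X)).injective this

lemma norm_Jw (x : X) : ‖WeakDual.toStrongDual (Jw x)‖ = ‖x‖ :=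
  (NormedSpace.inclusionInDoubleDualLi ℝ (E := X)).norm_map x

lemma isClosed_Jw_image (hrefl : Function.Surjective (NormedSpace.inclusionInDoubleDual ℝ X))
    {C : Set X} (hCc : IsClosed C) (hCconv : Convex ℝ C) : IsClosed (Jw '' C) := by
  rw [← isOpen_compl_iff]
  rw [isOpen_iff_mem_nhds]
  intro φ hφ
  obtain ⟨x, hx⟩ := hrefl (WeakDual.toStrongDual φ)
  have hJx : Jw x = φ := hx
  have hxC : x ∉ C := fun h => hφ ⟨x, h, hJx⟩
  obtain ⟨g, u, hgC, hgx⟩ := geometric_hahn_banach_closed_point hCconv hCc hxC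
  have hU : ((fun ψ : WeakDual ℝ (StrongDual ℝ X) => ψ g) ⁻¹' Ioi u) ∈ 𝓝 φ := by
    refine ((WeakDual.eval_continuous g).isOpen_preimage _ isOpen_Ioi).mem_nhds ?_
    show φ g ∈ Ioi u
    rw [← hJx]
    exact hgx
  refine Filter.mem_of_superset hU ?_
  rintro ψ hψ ⟨b, hb, rfl⟩
  exact absurd (hgC b hb) (not_lt.mpr (le_of_lt hψ))

lemma exists_isMinOn_reflexive [CompleteSpace X]
    (hrefl : Function.Surjective (NormedSpace.inclusionInDoubleDual ℝ X))
    {S : Set X} (hSne : S.Nonempty) (hSc : IsClosed S) (hSconv : Convex ℝ S)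
    {f : X → ℝ} (hfc : Continuous f) (hfconv : ConvexOn ℝ univ f)
    (hf0 : ∀ x, 0 ≤ f x) (hcoer : ∀ r : ℝ, IsBounded {x ∈ S | f x ≤ r}) :
    ∃ x ∈ S, ∀ y ∈ S, f x ≤ f y := by
  obtain ⟨x0, hx0⟩ := hSne
  set r := f x0 with hr
  set T := {x ∈ S | f x ≤ r} with hT
  have hTc : IsClosed T := hSc.inter (isClosed_le hfc continuous_const)
  have hTconv : Convex ℝ T := by
    have h1 := hfconv.convex_le r
    intro x hx y hy c d hc hd hcd
    exact ⟨hSconv hx.1 hy.1 hc hd hcd, (h1 ⟨trivial, hx.2⟩ ⟨trivial, hy.2⟩ hc hd hcd).2⟩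
  have hTb : IsBounded T := hcoer r
  have hTne : T.Nonempty := ⟨x0, hx0, le_rfl⟩
  have hbdd : BddBelow (f '' T) := ⟨0, fun y ⟨x, _, hx⟩ => hx ▸ hf0 x⟩
  set μ := sInf (f '' T) with hμ
  set Tn : ℕ → Set X := fun n => {x ∈ T | f x ≤ μ + 1 / (n + 1)} with hTn
  have hTnsub : ∀ n, Tn n ⊆ T := fun n x hx => hx.1
  have hTnc : ∀ n, IsClosed (Tn n) := fun n => hTc.inter (isClosed_le hfc continuous_const)
  have hTnconv : ∀ n, Convex ℝ (Tn n) := by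
    intro n
    have h1 := hfconv.convex_le (μ + 1 / (n + 1))
    intro x hx y hy c d hc hd hcd
    exact ⟨hTconv hx.1 hy.1 hc hd hcd, (h1 ⟨trivial, hx.2⟩ ⟨trivial, hy.2⟩ hc hd hcd).2⟩
  have hTnne : ∀ n, (Tn n).Nonempty := by
    intro n
    have hlt : μ < μ + 1 / (n + 1) := by
      have : (0:ℝ) < 1 / (n + 1) := by positivity
      linarith
    obtain ⟨y, ⟨x, hxT, rfl⟩, hy⟩ := exists_lt_of_csInf_lt (hTne.image f) hlt
    exact ⟨x, hxT, hy.le⟩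
  set K : ℕ → Set (WeakDual ℝ (StrongDual ℝ X)) := fun n => Jw '' (Tn n) with hK
  obtain ⟨M, hM⟩ := hTb.exists_norm_le
  have hKcomp : ∀ n, IsCompact (K n) := by
    intro n
    apply WeakDual.isCompact_of_bounded_of_closed
    · apply (Metric.isBounded_closedBall (x := (0 : StrongDual ℝ (StrongDual ℝ X))) (r := M)).subset
      intro ψ hψ
      obtain ⟨x, hxT, hEq⟩ := hψ
      have hψx : NormedSpace.inclusionInDoubleDual ℝ X x = ψ :=
        hEq
      rw [Metric.mem_closedBall, ← hψx]
      refine (dist_zero_right (NormedSpace.inclusionInDoubleDual ℝ X x)).le.trans ?_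
      calc ‖(NormedSpace.inclusionInDoubleDual ℝ X) x‖
          = ‖x‖ := (NormedSpace.inclusionInDoubleDualLi ℝ (E := X)).norm_map x
        _ ≤ M := hM x (hTnsub n hxT)
    · exact isClosed_Jw_image hrefl (hTnc n) (hTnconv n)
  have hKne : ∀ n, (K n).Nonempty := fun n => (hTnne n).image _
  have hKanti : ∀ n, K (n + 1) ⊆ K n := by
    intro n
    apply image_mono
    intro x hx
    refine ⟨hx.1, hx.2.trans ?_⟩
    have h1 : (0:ℝ) < (n:ℝ) + 1 := by positivity
    have h2 : ((n+1:ℕ):ℝ) + 1 = (n:ℝ) + 2 := by push_cast; ring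
    rw [h2]
    have : (1:ℝ)/((n:ℝ)+2) ≤ 1/((n:ℝ)+1) := by
      apply one_div_le_one_div_of_le h1; linarith
    linarith
  obtain ⟨φ, hφ⟩ := IsCompact.nonempty_iInter_of_sequence_nonempty_isCompact_isClosed
    K hKanti hKne (hKcomp 0) (fun n => (hKcomp n).isClosed)
  obtain ⟨xb, hxb0, hxbφ⟩ := (mem_iInter.mp hφ) 0
  have hfxb : ∀ n : ℕ, f xb ≤ μ + 1 / (n + 1) := by
    intro n
    obtain ⟨xn, hxn, hxnφ⟩ := (mem_iInter.mp hφ) n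
    have : xn = xb := Jw_injective (by rw [hxnφ, hxbφ])
    exact this ▸ hxn.2
  have hfle : f xb ≤ μ := by
    have htend : Tendsto (fun n : ℕ => μ + 1 / ((n:ℝ) + 1)) atTop (𝓝 μ) := by
      have h1 := tendsto_one_div_add_atTop_nhds_zero_nat (𝕜 := ℝ)
      have h2 := (tendsto_const_nhds (x := μ) (f := atTop (α := ℕ))).add h1
      simpa using h2
    exact ge_of_tendsto' htend hfxb
  refine ⟨xb, hxb0.1.1, fun y hy => ?_⟩
  by_cases hyT : y ∈ T
  · exact hfle.trans (csInf_le hbdd ⟨y, hyT, rfl⟩)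
  · have : r < f y := by
      by_contra h
      exact hyT ⟨hy, not_lt.mp h⟩
    have : f xb ≤ r := hxb0.1.2
    linarith

/-- Corollary 3.14. -/
theorem stmt19 (F : Set X)
    (hFc : IsClosed F) (hFb : IsBounded F) (hFconv : Convex ℝ F)
    (hF0 : (0 : X) ∈ interior F) (hFs : StrictConvex ℝ F)
    (S : Set X) (hSne : S.Nonempty) (hSc : IsClosed S) (hSconv : Convex ℝ S)
    (m : ℕ) (hm : 1 ≤ m) (a : Fin m → X)
    (hnotcol : ¬ ∃ x y : X, x ≠ y ∧ ∀ i, a i ∈ lineThrough x y) :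
    {x ∈ S | ∀ y ∈ S,
      ∑ i : Fin m, rhoF F (a i - x) ≤ ∑ i : Fin m, rhoF F (a i - y)}.Subsingleton ∧
    (((CompleteSpace X ∧ IsReflexiveSpace X) ∨ IsCompact S) →
      ∃! x : X, x ∈ S ∧ ∀ y ∈ S,
        ∑ i : Fin m, rhoF F (a i - x) ≤ ∑ i : Fin m, rhoF F (a i - y)) := by
  have h0F : (0 : X) ∈ F := interior_subset hF0
  have h0nhds : F ∈ 𝓝 (0 : X) := mem_interior_iff_mem_nhds.mp hF0
  have hrw : ∀ w : X, rhoF F w = gauge F w := rhoF_eq_gauge h0F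
  simp only [hrw]
  have hsub := key_subsingleton hFc hFb hFconv hF0 hFs hSconv (a := a) hnotcol
  refine ⟨hsub, ?_⟩
  intro hcase
  set f : X → ℝ := fun z => ∑ i : Fin m, gauge F (a i - z) with hf
  have hfc : Continuous f :=
    continuous_finset_sum _ fun i _ =>
      (continuous_gauge hFconv h0nhds).comp (continuous_const.sub continuous_id)
  have hfconv : ConvexOn ℝ univ f := by
    refine ⟨convex_univ, fun x _ y _ c d hc hd hcd => ?_⟩
    simp only [smul_eq_mul, hf]
    calc ∑ i : Fin m, gauge F (a i - (c • x + d • y))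
        ≤ ∑ i : Fin m, (c * gauge F (a i - x) + d * gauge F (a i - y)) := by
          refine Finset.sum_le_sum fun i _ => ?_
          have hdec : a i - (c • x + d • y) = c • (a i - x) + d • (a i - y) := by
            have h2 : c • a i + d • a i = a i := by rw [← add_smul, hcd, one_smul]
            rw [smul_sub, smul_sub]
            conv_lhs => rw [← h2]
            abel
          calc gauge F (a i - (c • x + d • y))
              = gauge F (c • (a i - x) + d • (a i - y)) := by rw [hdec]
            _ ≤ gauge F (c • (a i - x)) + gauge F (d • (a i - y)) :=
                gauge_add_le hFconv (absorbent_nhds_zero h0nhds) _ _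
            _ = c * gauge F (a i - x) + d * gauge F (a i - y) := by
                rw [gauge_smul_of_nonneg hc, gauge_smul_of_nonneg hd, smul_eq_mul, smul_eq_mul]
      _ = c * ∑ i : Fin m, gauge F (a i - x) + d * ∑ i : Fin m, gauge F (a i - y) := by
          rw [Finset.sum_add_distrib, ← Finset.mul_sum, ← Finset.mul_sum]
  have hf0 : ∀ x, 0 ≤ f x := fun x => Finset.sum_nonneg fun i _ => gauge_nonneg _
  have hexists : ∃ x ∈ S, ∀ y ∈ S, f x ≤ f y := by
    rcases hcase with ⟨hcomp, hrefl⟩ | hScomp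
    · have hcoer : ∀ r : ℝ, IsBounded {x ∈ S | f x ≤ r} := by
        intro r
        obtain ⟨R, hR, hRle⟩ := gauge_coercive hFb h0nhds
        rw [isBounded_iff_forall_norm_le]
        refine ⟨‖a ⟨0, hm⟩‖ + r * R, fun x hx => ?_⟩
        set i0 : Fin m := ⟨0, hm⟩
        have h1 : gauge F (a i0 - x) ≤ f x :=
          Finset.single_le_sum (f := fun i => gauge F (a i - x))
            (fun i _ => gauge_nonneg _) (Finset.mem_univ i0)
        have h2 : ‖a i0 - x‖ / R ≤ r := (hRle _).trans (h1.trans hx.2)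
        have h3 : ‖a i0 - x‖ ≤ r * R := by
          rw [div_le_iff₀ hR] at h2; linarith
        calc ‖x‖ = ‖a i0 - (a i0 - x)‖ := by congr 1; abel
          _ ≤ ‖a i0‖ + ‖a i0 - x‖ := norm_sub_le _ _
          _ ≤ ‖a i0‖ + r * R := by linarith
      exact exists_isMinOn_reflexive hrefl hSne hSc hSconv hfc hfconv hf0 hcoer
    · obtain ⟨x, hxS, hmin⟩ := hScomp.exists_isMinOn hSne hfc.continuousOn
      exact ⟨x, hxS, fun y hy => hmin hy⟩
  obtain ⟨x, hxS, hmin⟩ := hexists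
  refine ⟨x, ⟨hxS, hmin⟩, fun y hy => hsub hy ⟨hxS, hmin⟩⟩
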